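/- For every d ≥ 2, p ∈ (0,1), and k ≥ 1, we have (c_k(d)/c_{k-1}(d)) · p · (1-p)^{d-1} ≤ 1; equivalently the probability that a Galton-Watson tree with Bin(d,p) offspring has exactly k vertices is decreasing in k. -/

import Mathlib

open Finset Nat

private lemma fact_add' (n a : ℕ) : (n + a)! = n ! * ∏ i ∈ Finset.range a, (n + i + 1) := by
  induction a with
  | zero => simp
  | succ a ih =>
      rw [Finset.prod_range_succ, ← mul_assoc, ← ih, ← Nat.add_assoc, Nat.factorial_succ]
      ring

private lemma key_poly' (n : ℕ) (t : ℝ) (ht : 0 ≤ t) :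
    (n + 1 : ℝ) * t ^ n ≤ n * t ^ (n + 1) + 1 := by
  induction n with
  | zero => simp
  | succ n ih =>
      have h1 : (0:ℝ) ≤ t * ((n : ℝ) * t ^ (n+1) + 1 - (n+1) * t ^ n) :=
        mul_nonneg ht (by linarith)
      have h2 : (0:ℝ) ≤ (t - 1) * (t ^ (n+1) - 1) := by
        rcases le_total t 1 with h | h
        · have : t ^ (n+1) ≤ 1 := pow_le_one₀ ht h
          nlinarith
        · have : (1:ℝ) ≤ t ^ (n+1) := one_le_pow₀ h
          nlinarith
      have e1 : t ^ (n+1) = t ^ n * t := pow_succ t n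
      have e2 : t ^ (n+1+1) = t ^ n * t * t := by rw [pow_succ, e1]
      push_cast
      rw [e2]
      rw [e1] at h1 h2 ⊢
      nlinarith [h1, h2]

private lemma key_prod' (d m : ℕ) (hd : 2 ≤ d) :
    (∏ i ∈ Finset.range d, (d * m + i + 1)) * (d - 1) ^ (d - 1)
      ≤ (m + 1) * (∏ i ∈ Finset.range (d - 1), ((d - 1) * m + 1 + i + 1)) * d ^ d := by
  obtain ⟨e, rfl⟩ : ∃ e, d = e + 1 := ⟨d - 1, by omega⟩
  have he : 1 ≤ e := by omega
  simp only [Nat.add_sub_cancel]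
  rw [Finset.prod_range_succ]
  have h1 : (e + 1) * m + e + 1 = (e + 1) * (m + 1) := by ring
  have step : (∏ i ∈ Finset.range e, ((e + 1) * m + i + 1)) * e ^ e
      ≤ (∏ i ∈ Finset.range e, (e * m + 1 + i + 1)) * (e + 1) ^ e := by
    have l1 : ∏ i ∈ Finset.range e, (e * ((e + 1) * m + i + 1))
        = e ^ e * ∏ i ∈ Finset.range e, ((e + 1) * m + i + 1) := by
      rw [Finset.prod_mul_distrib, Finset.prod_const, Finset.card_range]
    have l2 : ∏ i ∈ Finset.range e, ((e + 1) * (e * m + 1 + i + 1))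
        = (e + 1) ^ e * ∏ i ∈ Finset.range e, (e * m + 1 + i + 1) := by
      rw [Finset.prod_mul_distrib, Finset.prod_const, Finset.card_range]
    have hmain : ∏ i ∈ Finset.range e, (e * ((e + 1) * m + i + 1))
        ≤ ∏ i ∈ Finset.range e, ((e + 1) * (e * m + 1 + i + 1)) := by
      refine Finset.prod_le_prod' ?_
      intro i hi
      have : i < e := Finset.mem_range.mp hi
      nlinarith
    rw [l1, l2] at hmain
    calc (∏ i ∈ Finset.range e, ((e + 1) * m + i + 1)) * e ^ e
        = e ^ e * ∏ i ∈ Finset.range e, ((e + 1) * m + i + 1) := by ring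
      _ ≤ (e + 1) ^ e * ∏ i ∈ Finset.range e, (e * m + 1 + i + 1) := hmain
      _ = (∏ i ∈ Finset.range e, (e * m + 1 + i + 1)) * (e + 1) ^ e := by ring
  calc (∏ i ∈ Finset.range e, ((e + 1) * m + i + 1)) * ((e + 1) * m + e + 1) * e ^ e
      = ((e + 1) * (m + 1)) * ((∏ i ∈ Finset.range e, ((e + 1) * m + i + 1)) * e ^ e) := by
        rw [h1]; ring
    _ ≤ ((e + 1) * (m + 1)) * ((∏ i ∈ Finset.range e, (e * m + 1 + i + 1)) * (e + 1) ^ e) :=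
        Nat.mul_le_mul_left _ step
    _ = (m + 1) * (∏ i ∈ Finset.range e, (e * m + 1 + i + 1)) * (e + 1) ^ (e + 1) := by
        rw [pow_succ]; ring

private lemma nat_core' (d m : ℕ) (hd : 2 ≤ d) :
    (d * (m + 1))! * m ! * ((d - 1) * m + 1)! * (d - 1) ^ (d - 1)
      ≤ (d * m)! * (m + 1)! * ((d - 1) * (m + 1) + 1)! * d ^ d := by
  have h1 : d * (m + 1) = d * m + d := by ring
  have h2 : (d - 1) * (m + 1) + 1 = ((d - 1) * m + 1) + (d - 1) := by ring
  rw [h1, h2, fact_add' (d * m) d, fact_add' ((d - 1) * m + 1) (d - 1), Nat.factorial_succ]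
  calc (d*m)! * (∏ i ∈ Finset.range d, (d*m + i + 1)) * m ! * ((d-1)*m+1)! * (d-1)^(d-1)
      = ((d*m)! * m ! * ((d-1)*m+1)!) *
          ((∏ i ∈ Finset.range d, (d*m + i + 1)) * (d-1)^(d-1)) := by ring
    _ ≤ ((d*m)! * m ! * ((d-1)*m+1)!) *
          ((m+1) * (∏ i ∈ Finset.range (d-1), ((d-1)*m + 1 + i + 1)) * d ^ d) :=
        Nat.mul_le_mul_left _ (key_prod' d m hd)
    _ = (d*m)! * ((m+1) * m !) * (((d-1)*m+1)! * ∏ i ∈ Finset.range (d-1), ((d-1)*m+1 + i + 1)) * d ^ d := by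
        ring

noncomputable def c (d k : ℕ) : ℝ := (Nat.choose (d * k) k : ℝ) / ((d - 1) * k + 1)

private lemma c_eq' (d k : ℕ) (hd : 2 ≤ d) :
    c d k = ((d * k)! : ℝ) / ((k ! : ℝ) * (((d - 1) * k + 1)! : ℝ)) := by
  have hk : k ≤ d * k := Nat.le_mul_of_pos_left k (by omega)
  have hsub : d * k - k = (d - 1) * k := by
    cases d with
    | zero => omega
    | succ e => simp [Nat.succ_sub_one, Nat.succ_mul]
  have hch : (Nat.choose (d * k) k) * k ! * ((d - 1) * k)! = (d * k)! := by
    rw [← hsub]; exact Nat.choose_mul_factorial_mul_factorial hk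
  have hden : ((d : ℝ) - 1) * k + 1 = (((d - 1) * k + 1 : ℕ) : ℝ) := by
    push_cast [Nat.cast_sub (show (1:ℕ) ≤ d by omega)]; ring
  unfold c
  rw [hden, Nat.factorial_succ]
  have h3 : (0:ℝ) < (((d-1)*k+1 : ℕ) : ℝ) := by positivity
  rw [div_eq_div_iff h3.ne' (by positivity)]
  push_cast
  rw [← hch]
  push_cast
  ring

private lemma c_pos' (d k : ℕ) (hd : 2 ≤ d) : 0 < c d k := by
  rw [c_eq' d k hd]
  positivity

private lemma ratio' (d m : ℕ) (hd : 2 ≤ d) :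
    c d (m + 1) * ((d : ℝ) - 1) ^ (d - 1) ≤ c d m * (d : ℝ) ^ d := by
  have hcast : ((d : ℝ) - 1) = ((d - 1 : ℕ) : ℝ) := by
    push_cast [Nat.cast_sub (show (1:ℕ) ≤ d by omega)]; ring
  rw [c_eq' d (m+1) hd, c_eq' d m hd, hcast]
  have h1 : (0:ℝ) < ((m+1)! : ℝ) * (((d-1)*(m+1)+1)! : ℝ) := by positivity
  have h2 : (0:ℝ) < ((m)! : ℝ) * (((d-1)*m+1)! : ℝ) := by positivity
  rw [div_mul_eq_mul_div, div_mul_eq_mul_div, div_le_div_iff₀ h1 h2]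
  have hcast2 := (Nat.cast_le (α := ℝ)).mpr (nat_core' d m hd)
  push_cast at hcast2
  nlinarith [hcast2]

private lemma amgm' (n : ℕ) (hn : 1 ≤ n) (p : ℝ) (hp0 : 0 ≤ p) (hp1 : p ≤ 1) :
    ((n : ℝ) + 1) ^ (n + 1) * p * (1 - p) ^ n ≤ (n : ℝ) ^ n := by
  have hnR : (0:ℝ) < n := by exact_mod_cast hn
  set t : ℝ := ((n : ℝ) + 1) * (1 - p) / n with ht_def
  have ht : 0 ≤ t := by
    apply div_nonneg (mul_nonneg (by positivity) (by linarith)) (le_of_lt hnR)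
  have hkey := key_poly' n t ht
  have hnt : (n : ℝ) * t = ((n : ℝ) + 1) * (1 - p) := by
    rw [ht_def]; field_simp
  have h1 : t ^ n * (((n : ℝ) + 1) - (n : ℝ) * t) ≤ 1 := by
    have : (n : ℝ) * t ^ (n+1) = t ^ n * ((n : ℝ) * t) := by rw [pow_succ]; ring
    nlinarith [hkey]
  have h2 : ((n : ℝ) + 1) - (n : ℝ) * t = ((n : ℝ) + 1) * p := by
    rw [hnt]; ring
  rw [h2] at h1
  have h3 : t ^ n * (n : ℝ) ^ n = (((n : ℝ) + 1) * (1 - p)) ^ n := by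
    rw [← mul_pow]
    congr 1
    rw [ht_def]; field_simp
  have h4 : (0:ℝ) < (n : ℝ) ^ n := by positivity
  calc ((n : ℝ) + 1) ^ (n + 1) * p * (1 - p) ^ n
      = (t ^ n * (((n : ℝ) + 1) * p)) * (n : ℝ) ^ n := by
        rw [show (t ^ n * (((n:ℝ)+1) * p)) * (n:ℝ)^n = (t ^ n * (n:ℝ)^n) * (((n:ℝ)+1) * p) by ring,
           h3, mul_pow, pow_succ]
        ring
    _ ≤ 1 * (n : ℝ) ^ n := by
        apply mul_le_mul_of_nonneg_right h1 (le_of_lt h4)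
    _ = (n : ℝ) ^ n := by ring

/-- `(c_k/c_{k-1})·p·(1-p)^{d-1} ≤ 1`; equivalently `η_k(p) = c_k p^k (1-p)^{(d-1)k+1}`,
the probability that a Bin(d,p) Galton-Watson tree has exactly `k` vertices,
is decreasing in `k`. -/
theorem gw_size_prob_decreasing (d k : ℕ) (p : ℝ) (hd : 2 ≤ d) (hk : 1 ≤ k)
    (hp0 : 0 < p) (hp1 : p < 1) :
    (c d k / c d (k - 1)) * p * (1 - p) ^ (d - 1) ≤ 1 ∧
      c d k * p ^ k * (1 - p) ^ ((d - 1) * k + 1)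
        ≤ c d (k - 1) * p ^ (k - 1) * (1 - p) ^ ((d - 1) * (k - 1) + 1) := by
  obtain ⟨m, rfl⟩ : ∃ m, k = m + 1 := ⟨k - 1, by omega⟩
  simp only [Nat.add_sub_cancel]
  have hcm : 0 < c d m := c_pos' d m hd
  have hck : 0 < c d (m + 1) := c_pos' d (m + 1) hd
  have hdR : (0:ℝ) < (d : ℝ) ^ d := by positivity
  -- AM-GM with n = d - 1
  have hcast : ((d - 1 : ℕ) : ℝ) = (d : ℝ) - 1 := by
    push_cast [Nat.cast_sub (show (1:ℕ) ≤ d by omega)]; ring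
  have hamgm := amgm' (d - 1) (by omega) p (le_of_lt hp0) (le_of_lt hp1)
  rw [hcast, show ((d:ℝ) - 1 + 1) = (d:ℝ) by ring, show (d - 1) + 1 = d by omega] at hamgm
  -- hamgm : (d:ℝ)^d * p * (1-p)^(d-1) ≤ ((d:ℝ)-1)^(d-1)
  have hratio := ratio' d m hd
  -- key : c d (m+1) * (p * (1-p)^(d-1)) ≤ c d m
  have key : c d (m + 1) * (p * (1 - p) ^ (d - 1)) ≤ c d m := by
    have step1 : c d (m + 1) * (p * (1 - p) ^ (d - 1)) * (d : ℝ) ^ d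
        ≤ c d (m + 1) * ((d : ℝ) - 1) ^ (d - 1) := by
      have := mul_le_mul_of_nonneg_left hamgm (le_of_lt hck)
      nlinarith [this]
    have step2 : c d (m + 1) * (p * (1 - p) ^ (d - 1)) * (d : ℝ) ^ d
        ≤ c d m * (d : ℝ) ^ d := le_trans step1 hratio
    exact le_of_mul_le_mul_right step2 hdR
  constructor
  · rw [div_mul_eq_mul_div, div_mul_eq_mul_div, div_le_one hcm]
    calc c d (m + 1) * p * (1 - p) ^ (d - 1)
        = c d (m + 1) * (p * (1 - p) ^ (d - 1)) := by ring
      _ ≤ c d m := key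
  · have hpow : (0:ℝ) ≤ p ^ m * (1 - p) ^ ((d - 1) * m + 1) := by
      apply mul_nonneg (le_of_lt (pow_pos hp0 m))
      apply pow_nonneg; linarith
    have hmul := mul_le_mul_of_nonneg_right key hpow
    calc c d (m + 1) * p ^ (m + 1) * (1 - p) ^ ((d - 1) * (m + 1) + 1)
        = c d (m + 1) * (p * (1 - p) ^ (d - 1)) * (p ^ m * (1 - p) ^ ((d - 1) * m + 1)) := by
          rw [show (d - 1) * (m + 1) + 1 = ((d - 1) * m + 1) + (d - 1) by ring,
             pow_add, pow_succ]
          ring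
      _ ≤ c d m * (p ^ m * (1 - p) ^ ((d - 1) * m + 1)) := hmul
      _ = c d m * p ^ m * (1 - p) ^ ((d - 1) * m + 1) := by ring
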